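/- Let n ≥ 3 and let M be a perfect matching of the complete bipartite graph K_{n,n}. Then the edge reconstruction number of G = K_{n,n} − M is at least 3: for every multiset S of at most 2 edge-cards of G there exists a graph H not isomorphic to G whose edge-deck contains S as a sub-multiset. -/

import Mathlib

open SimpleGraph
open scoped Classical

def iso_deleteEdges_map {V : Type} {G G' : SimpleGraph V} (φ : G ≃g G') (e : Sym2 V) :
    (G.deleteEdges {e}) ≃g (G'.deleteEdges {Sym2.map φ e}) where
  toEquiv := φ.toEquiv
  map_rel_iff' := by
    intro v w
    simp only [deleteEdges_adj, Set.mem_singleton_iff]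
    rw [show s(φ.toEquiv v, φ.toEquiv w) = Sym2.map φ s(v, w) from (Sym2.map_pair_eq _ _ _).symm]
    rw [(Sym2.map.injective φ.injective).eq_iff]
    constructor
    · rintro ⟨h1, h2⟩; exact ⟨φ.map_adj_iff.mp h1, h2⟩
    · rintro ⟨h1, h2⟩; exact ⟨φ.map_adj_iff.mpr h1, h2⟩

def crown_aut {n : ℕ} (Gg : SimpleGraph (Fin n ⊕ Fin n)) (σe : Fin n ≃ Fin n)
    (hlr : ∀ a b, Gg.Adj (Sum.inl a) (Sum.inr b) ↔ b ≠ σe a)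
    (hll : ∀ a a', ¬ Gg.Adj (Sum.inl a) (Sum.inl a'))
    (hrr : ∀ b b', ¬ Gg.Adj (Sum.inr b) (Sum.inr b'))
    (α : Fin n ≃ Fin n) : Gg ≃g Gg where
  toEquiv := Equiv.sumCongr α ((σe.symm.trans α).trans σe)
  map_rel_iff' := by
    intro v w
    rcases v with a | b <;> rcases w with a' | b'
    · simp [hll]
    · simp only [Equiv.sumCongr_apply, Sum.map_inl, Sum.map_inr, Equiv.trans_apply]
      rw [hlr, hlr]
      simp [Ne, Equiv.apply_eq_iff_eq, Equiv.symm_apply_eq]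
    · rw [Gg.adj_comm, Gg.adj_comm (Sum.inr b)]
      simp only [Equiv.sumCongr_apply, Sum.map_inl, Sum.map_inr, Equiv.trans_apply]
      rw [hlr, hlr]
      simp [Ne, Equiv.apply_eq_iff_eq, Equiv.symm_apply_eq]
    · simp [hrr]

/-- The edge-deck of `G`: the multiset of edge-deleted subgraphs `G - e` over all edges
`e` of `G` (each regarded up to isomorphism via `DeckContains` below). -/
noncomputable def edgeDeck {V : Type} [Fintype V] (G : SimpleGraph V) :
    Multiset (SimpleGraph V) :=
  G.edgeFinset.val.map fun e => G.deleteEdges {e}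

lemma mem_edgeDeck_of_mem {V : Type} [Fintype V] {H : SimpleGraph V} {e : Sym2 V}
    (he : e ∈ H.edgeSet) : H.deleteEdges {e} ∈ edgeDeck H := by
  unfold edgeDeck
  exact Multiset.mem_map.mpr ⟨e, by rwa [Finset.mem_val, mem_edgeFinset], rfl⟩

lemma exists_of_mem_edgeDeck {V : Type} [Fintype V] {H : SimpleGraph V}
    {A : SimpleGraph V} (hA : A ∈ edgeDeck H) :
    ∃ e ∈ H.edgeSet, A = H.deleteEdges {e} := by
  unfold edgeDeck at hA
  obtain ⟨e, he, rfl⟩ := Multiset.mem_map.mp hA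
  exact ⟨e, by rwa [Finset.mem_val, mem_edgeFinset] at he, rfl⟩

lemma pair_le_edgeDeck {V : Type} [Fintype V] {H : SimpleGraph V} {e f : Sym2 V}
    (he : e ∈ H.edgeSet) (hf : f ∈ H.edgeSet) (hef : e ≠ f) :
    H.deleteEdges {e} ::ₘ {H.deleteEdges {f}} ≤ edgeDeck H := by
  unfold edgeDeck
  have hsub : ({e, f} : Finset (Sym2 V)) ⊆ H.edgeFinset := by
    intro x hx
    rcases Finset.mem_insert.mp hx with rfl | hx
    · rwa [mem_edgeFinset]
    · rw [Finset.mem_singleton] at hx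
      subst hx
      rwa [mem_edgeFinset]
  have hval : ({e, f} : Finset (Sym2 V)).val = e ::ₘ {f} := by
    rw [Finset.insert_val_of_notMem (by rwa [Finset.mem_singleton])]
    rfl
  have hmap := Multiset.map_le_map (f := fun x => H.deleteEdges {x}) (Finset.val_le_iff.mpr hsub)
  rwa [hval, Multiset.map_cons, Multiset.map_singleton] at hmap

/-- `S` is a sub-multiset of the edge-deck of `H`, up to isomorphism of the cards. -/
def DeckContains {V : Type} [Fintype V] (H : SimpleGraph V)
    (S : Multiset (SimpleGraph V)) : Prop :=
  ∃ T ≤ edgeDeck H, Multiset.Rel (fun A B => Nonempty (A ≃g B)) S T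

/-- The edge reconstruction number of `G` is at least 3: every multiset of at most two
edge-cards of `G` admits a blocker, i.e. a graph `H` not isomorphic to `G` whose edge-deck
contains the given cards. -/
def ErnGeThree {V : Type} [Fintype V] (G : SimpleGraph V) : Prop :=
  ∀ S : Multiset (SimpleGraph V), S ≤ edgeDeck G → S.card ≤ 2 →
    ∃ H : SimpleGraph V, ¬ Nonempty (H ≃g G) ∧ DeckContains H S

/-- If `n ≥ 3` and `M` is a perfect matching of `K_{n,n}`, then the edge reconstruction
number of `K_{n,n} - M` is at least 3. -/
theorem stmt_8 (n : ℕ) (hn : 3 ≤ n)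
    (M : (completeBipartiteGraph (Fin n) (Fin n)).Subgraph)
    (hM : M.IsPerfectMatching) :
    ErnGeThree (completeBipartiteGraph (Fin n) (Fin n) \ M.spanningCoe) := by
  rw [Subgraph.isPerfectMatching_iff] at hM
  set Gg : SimpleGraph (Fin n ⊕ Fin n) :=
    completeBipartiteGraph (Fin n) (Fin n) \ M.spanningCoe with hGg
  -- M only joins left to right
  have hMll : ∀ (a a' : Fin n), ¬ M.Adj (Sum.inl a) (Sum.inl a') := by
    intro a a' h
    simpa using M.adj_sub h
  have hMrr : ∀ (b b' : Fin n), ¬ M.Adj (Sum.inr b) (Sum.inr b') := by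
    intro b b' h
    simpa using M.adj_sub h
  -- extract the matching bijection
  have hex : ∀ a : Fin n, ∃ b : Fin n, M.Adj (Sum.inl a) (Sum.inr b) := by
    intro a
    obtain ⟨w, hw, -⟩ := hM (Sum.inl a)
    cases w with
    | inl a' => exact absurd hw (hMll a a')
    | inr b => exact ⟨b, hw⟩
  choose σ0 hσ0 using hex
  have hσuniq : ∀ a b, M.Adj (Sum.inl a) (Sum.inr b) ↔ b = σ0 a := by
    intro a b
    constructor
    · intro h
      obtain ⟨w, hw, hu⟩ := hM (Sum.inl a)
      have h1 := hu _ h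
      have h2 := hu _ (hσ0 a)
      rw [← h2] at h1
      exact Sum.inr.inj h1
    · rintro rfl; exact hσ0 a
  have hinj : Function.Injective σ0 := by
    intro a a' h
    obtain ⟨w, hw, hu⟩ := hM (Sum.inr (σ0 a))
    have h1 := hu _ (hσ0 a).symm
    have h2 := hu _ (h ▸ (hσ0 a').symm)
    rw [← h2] at h1
    exact Sum.inl.inj h1
  have hbij : Function.Bijective σ0 := (Finite.injective_iff_bijective).mp hinj
  set σe : Fin n ≃ Fin n := Equiv.ofBijective σ0 hbij with hσe
  have hσapp : ∀ a, σe a = σ0 a := fun a => rfl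
  have hMlr : ∀ a b, M.Adj (Sum.inl a) (Sum.inr b) ↔ b = σe a := by
    intro a b; rw [hσapp]; exact hσuniq a b
  -- adjacency in Gg
  have hGlr : ∀ a b, Gg.Adj (Sum.inl a) (Sum.inr b) ↔ b ≠ σe a := by
    intro a b
    rw [hGg]
    simp [hMlr a b]
  have hGll : ∀ a a', ¬ Gg.Adj (Sum.inl a) (Sum.inl a') := by
    intro a a' h
    rw [hGg] at h
    simpa using h.1
  have hGrr : ∀ b b', ¬ Gg.Adj (Sum.inr b) (Sum.inr b') := by
    intro b b' h
    rw [hGg] at h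
    simpa using h.1
  -- special vertices and edges
  set i0 : Fin n := ⟨0, by omega⟩ with hi0
  set i1 : Fin n := ⟨1, by omega⟩ with hi1
  have h01 : i0 ≠ i1 := by simp [hi0, hi1, Fin.ext_iff]
  have hs01 : σe i0 ≠ σe i1 := fun h => h01 (σe.injective h)
  set estar : Sym2 (Fin n ⊕ Fin n) := s(Sum.inl i0, Sum.inr (σe i1)) with hestar
  set m : Sym2 (Fin n ⊕ Fin n) := s(Sum.inl i0, Sum.inr (σe i0)) with hm
  set f2 : Sym2 (Fin n ⊕ Fin n) := s(Sum.inl i1, Sum.inr (σe i0)) with hf2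
  set C : SimpleGraph (Fin n ⊕ Fin n) := Gg.deleteEdges {estar} with hC
  set Hb : SimpleGraph (Fin n ⊕ Fin n) := C ⊔ fromEdgeSet {m} with hHb
  -- adjacency in Hb
  have hH : ∀ v w, Hb.Adj v w ↔ ((Gg.Adj v w ∧ s(v, w) ≠ estar) ∨ s(v, w) = m) := by
    intro v w
    rw [hHb, hC]
    simp only [sup_adj, deleteEdges_adj, Set.mem_singleton_iff, fromEdgeSet_adj]
    constructor
    · rintro (⟨h1, h2⟩ | ⟨h1, h2⟩)
      · exact Or.inl ⟨h1, h2⟩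
      · exact Or.inr h1
    · rintro (⟨h1, h2⟩ | h1)
      · exact Or.inl ⟨h1, h2⟩
      · refine Or.inr ⟨h1, ?_⟩
        rintro rfl
        have : (s(v, v) : Sym2 (Fin n ⊕ Fin n)).IsDiag := Sym2.mk_isDiag_iff.mpr rfl
        rw [h1, hm] at this
        simp at this
  -- Gg never contains the edge m
  have hGm : ∀ v w, Gg.Adj v w → s(v, w) ≠ m := by
    intro v w h hvw
    rw [hm, Sym2.eq_iff] at hvw
    rcases hvw with ⟨rfl, rfl⟩ | ⟨rfl, rfl⟩
    · exact (hGlr i0 (σe i0)).mp h rfl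
    · exact (hGlr i0 (σe i0)).mp h.symm rfl
  -- deleting m from Hb gives back C
  have hHm : Hb.deleteEdges {m} = C := by
    ext v w
    simp only [deleteEdges_adj, Set.mem_singleton_iff, hH, hC, Set.mem_singleton_iff]
    have := hGm v w
    tauto
  -- every edge-card of Gg is isomorphic to C
  have claim1 : ∀ e ∈ Gg.edgeSet, Nonempty (Gg.deleteEdges {e} ≃g C) := by
    intro e he
    induction e using Sym2.ind with
    | _ x y =>
    rw [mem_edgeSet] at he
    obtain ⟨i, b, hb, hxy⟩ : ∃ i b, b ≠ σe i ∧ s(x, y) = s(Sum.inl i, Sum.inr b) := by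
      rcases x with a | c <;> rcases y with a' | c'
      · exact absurd he (hGll a a')
      · exact ⟨a, c', (hGlr a c').mp he, rfl⟩
      · exact ⟨a', c, (hGlr a' c).mp he.symm, Sym2.eq_swap⟩
      · exact absurd he (hGrr c c')
    rw [hxy]
    obtain ⟨j, rfl⟩ : ∃ j, b = σe j := ⟨σe.symm b, (σe.apply_symm_apply b).symm⟩
    have hji : j ≠ i := fun h => hb (congrArg σe h)
    have hτj : Equiv.swap i i0 j ≠ i0 := by
      intro h
      exact hji ((Equiv.swap i i0).injective (h.trans (Equiv.swap_apply_left i i0).symm))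
    set α : Fin n ≃ Fin n := (Equiv.swap i i0).trans (Equiv.swap (Equiv.swap i i0 j) i1) with hα
    have hαi : α i = i0 := by
      rw [hα]
      simp only [Equiv.trans_apply, Equiv.swap_apply_left]
      exact Equiv.swap_apply_of_ne_of_ne (fun h => hτj h.symm) h01
    have hαj : α j = i1 := by
      rw [hα]
      simp only [Equiv.trans_apply]
      exact Equiv.swap_apply_left _ _
    have key : Sym2.map (crown_aut Gg σe hGlr hGll hGrr α) s(Sum.inl i, Sum.inr (σe j)) = estar := by
      rw [show ⇑(crown_aut Gg σe hGlr hGll hGrr α) = ⇑(Equiv.sumCongr α ((σe.symm.trans α).trans σe)) from rfl]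
      rw [Sym2.map_pair_eq, hestar]
      simp only [Equiv.sumCongr_apply, Sum.map_inl, Sum.map_inr, Equiv.trans_apply, hαi,
        Equiv.symm_apply_apply, hαj]
    have h2 := iso_deleteEdges_map (crown_aut Gg σe hGlr hGll hGrr α) s(Sum.inl i, Sum.inr (σe j))
    rw [key] at h2
    exact ⟨h2⟩
  -- core computation for the second blocker card
  have core : ∀ a b, (Gg.Adj (Sum.inl (Equiv.swap i0 i1 a)) (Sum.inr b) ∧
      s(Sum.inl (Equiv.swap i0 i1 a), Sum.inr b) ≠ estar) ↔
      ((Gg.Adj (Sum.inl a) (Sum.inr b) ∧ s(Sum.inl a, Sum.inr b) ≠ estar ∨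
        s(Sum.inl a, Sum.inr b) = m) ∧ s(Sum.inl a, Sum.inr b) ≠ f2) := by
    intro a b
    rw [hGlr, hGlr, hestar, hm, hf2]
    simp only [Ne, Sym2.eq_iff, Sum.inl.injEq, Sum.inr.injEq, reduceCtorEq, and_false,
      false_and, or_false, not_and, not_or]
    by_cases ha0 : a = i0
    · subst ha0
      rw [Equiv.swap_apply_left]
      by_cases hb : b = σe i0 <;> by_cases hb' : b = σe i1 <;>
        simp [hb, hb', hs01, h01, Ne.symm h01, hs01.symm]
    · by_cases ha1 : a = i1
      · subst ha1
        rw [Equiv.swap_apply_right]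
        by_cases hb : b = σe i0 <;> by_cases hb' : b = σe i1 <;>
          simp [hb, hb', hs01, h01, Ne.symm h01, hs01.symm]
      · rw [Equiv.swap_apply_of_ne_of_ne ha0 ha1]
        simp [ha0, ha1]
  -- Hb minus f2 is isomorphic to C
  have hHf : Nonempty (Hb.deleteEdges {f2} ≃g C) := by
    refine ⟨⟨Equiv.sumCongr (Equiv.swap i0 i1) (Equiv.refl (Fin n)), ?_⟩⟩
    intro v w
    simp only [deleteEdges_adj, Set.mem_singleton_iff, hH, hC, Equiv.sumCongr_apply,
      Sum.map_inl, Sum.map_inr, Equiv.refl_apply]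
    rcases v with a | b <;> rcases w with a' | b'
    · constructor
      · rintro ⟨h1, -⟩
        exact absurd h1 (hGll _ _)
      · rintro ⟨⟨h1, -⟩ | h1, -⟩
        · exact absurd h1 (hGll _ _)
        · exfalso
          rw [hm, Sym2.eq_iff] at h1
          simp at h1
    · exact core a b'
    · have hcore := core a' b
      constructor
      · rintro ⟨h1, h2⟩
        rw [Sym2.eq_swap] at h2
        obtain ⟨h3, h4⟩ := hcore.mp ⟨h1.symm, h2⟩
        refine ⟨?_, by rwa [Sym2.eq_swap]⟩
        rcases h3 with ⟨h5, h6⟩ | h5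
        · exact Or.inl ⟨h5.symm, by rwa [Sym2.eq_swap]⟩
        · exact Or.inr (by rwa [Sym2.eq_swap])
      · rintro ⟨h3, h4⟩
        rw [Sym2.eq_swap] at h4
        have h3' : (Gg.Adj (Sum.inl a') (Sum.inr b) ∧ s(Sum.inl a', Sum.inr b) ≠ estar ∨
            s(Sum.inl a', Sum.inr b) = m) := by
          rcases h3 with ⟨h5, h6⟩ | h5
          · exact Or.inl ⟨h5.symm, by rwa [Sym2.eq_swap] at h6⟩
          · exact Or.inr (by rwa [Sym2.eq_swap] at h5)
        obtain ⟨h1, h2⟩ := hcore.mpr ⟨h3', h4⟩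
        exact ⟨h1.symm, by rwa [Sym2.eq_swap] at h2⟩
    · constructor
      · rintro ⟨h1, -⟩
        exact absurd h1 (hGrr _ _)
      · rintro ⟨⟨h1, -⟩ | h1, -⟩
        · exact absurd h1 (hGrr _ _)
        · exfalso
          rw [hm, Sym2.eq_iff] at h1
          simp at h1
  -- edges of Hb
  have hmE : m ∈ Hb.edgeSet := by
    rw [hm, mem_edgeSet, hH]
    exact Or.inr rfl
  have hf2E : f2 ∈ Hb.edgeSet := by
    rw [hf2, mem_edgeSet, hH]
    refine Or.inl ⟨(hGlr i1 (σe i0)).mpr hs01, ?_⟩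
    rw [hestar, Ne, Sym2.eq_iff]
    simp [Ne.symm h01]
  have hmf2 : m ≠ f2 := by
    rw [hm, hf2, Ne, Sym2.eq_iff]
    simp [h01]
  -- degrees
  have hdegG : ∀ v, Gg.degree v = n - 1 := by
    intro v
    rw [SimpleGraph.degree]
    cases v with
    | inl a =>
      rw [show Gg.neighborFinset (Sum.inl a) =
          (Finset.univ.erase (σe a)).map ⟨Sum.inr, Sum.inr_injective⟩ by
        ext x
        cases x with
        | inl a' => simp [mem_neighborFinset, hGll a a']
        | inr b => simp [mem_neighborFinset, hGlr a b]]
      rw [Finset.card_map, Finset.card_erase_of_mem (Finset.mem_univ _), Finset.card_univ,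
        Fintype.card_fin]
    | inr b =>
      rw [show Gg.neighborFinset (Sum.inr b) =
          (Finset.univ.erase (σe.symm b)).map ⟨Sum.inl, Sum.inl_injective⟩ by
        ext x
        cases x with
        | inl a =>
          rw [mem_neighborFinset, Gg.adj_comm, hGlr a b]
          simp [Ne, Equiv.eq_symm_apply, eq_comm]
        | inr b' => simp [mem_neighborFinset, hGrr b b']]
      rw [Finset.card_map, Finset.card_erase_of_mem (Finset.mem_univ _), Finset.card_univ,
        Fintype.card_fin]
  have hdegH : Hb.degree (Sum.inr (σe i0)) = n := by
    rw [SimpleGraph.degree]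
    rw [show Hb.neighborFinset (Sum.inr (σe i0)) =
        Finset.univ.map ⟨Sum.inl, Sum.inl_injective⟩ by
      ext x
      cases x with
      | inl a =>
        simp only [mem_neighborFinset, Finset.mem_map, Finset.mem_univ, true_and,
          Function.Embedding.coeFn_mk]
        constructor
        · intro _; exact ⟨a, rfl⟩
        · intro _
          rw [Hb.adj_comm, hH]
          by_cases ha : a = i0
          · subst ha
            exact Or.inr rfl
          · refine Or.inl ⟨(hGlr a (σe i0)).mpr (fun h => ha (σe.injective h).symm), ?_⟩
            rw [hestar, Ne, Sym2.eq_iff]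
            simp [hs01]
      | inr b =>
        simp only [mem_neighborFinset, Finset.mem_map, Finset.mem_univ, true_and,
          Function.Embedding.coeFn_mk]
        rw [hH]
        constructor
        · rintro (⟨h1, -⟩ | h1)
          · exact absurd h1 (hGrr _ _)
          · exfalso
            rw [hm, Sym2.eq_iff] at h1
            simp at h1
        · rintro ⟨a, h⟩
          exact absurd h (by simp)]
    rw [Finset.card_map, Finset.card_univ, Fintype.card_fin]
  -- Hb is not isomorphic to Gg
  have hnon : ¬ Nonempty (Hb ≃g Gg) := by
    rintro ⟨φ⟩
    have h1 : Hb.degree (Sum.inr (σe i0)) = Gg.degree (φ (Sum.inr (σe i0))) := by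
      have := Fintype.card_congr (φ.mapNeighborSet (Sum.inr (σe i0)))
      rwa [card_neighborSet_eq_degree, card_neighborSet_eq_degree] at this
    rw [hdegH, hdegG] at h1
    omega
  -- helper: composing nonempty isos
  have cc : ∀ {A B D : SimpleGraph (Fin n ⊕ Fin n)},
      Nonempty (A ≃g B) → Nonempty (B ≃g D) → Nonempty (A ≃g D) := by
    rintro A B D ⟨f⟩ ⟨g⟩
    exact ⟨f.trans g⟩
  have hCm : Nonempty (C ≃g Hb.deleteEdges {m}) := by
    rw [hHm]
    exact ⟨Iso.refl⟩
  have hCf : Nonempty (C ≃g Hb.deleteEdges {f2}) := by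
    obtain ⟨g⟩ := hHf
    exact ⟨g.symm⟩
  -- membership of the two cards in the edge deck of Hb
  have hdeckm : Hb.deleteEdges {m} ∈ edgeDeck Hb := mem_edgeDeck_of_mem hmE
  -- assemble
  intro S hS hcard
  refine ⟨Hb, hnon, ?_⟩
  have hiso : ∀ A ∈ S, Nonempty (A ≃g C) := by
    intro A hA
    obtain ⟨e, he, rfl⟩ := exists_of_mem_edgeDeck (Multiset.mem_of_le hS hA)
    exact claim1 e he
  obtain h0 | h1 | h2 : S.card = 0 ∨ S.card = 1 ∨ S.card = 2 := by omega
  · rw [Multiset.card_eq_zero] at h0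
    subst h0
    exact ⟨0, zero_le, Multiset.Rel.zero⟩
  · obtain ⟨A, rfl⟩ := Multiset.card_eq_one.mp h1
    refine ⟨{Hb.deleteEdges {m}}, Multiset.singleton_le.mpr hdeckm, ?_⟩
    exact Multiset.Rel.cons (cc (hiso A (Multiset.mem_singleton_self A)) hCm) Multiset.Rel.zero
  · obtain ⟨A, B, rfl⟩ := Multiset.card_eq_two.mp h2
    refine ⟨Hb.deleteEdges {m} ::ₘ {Hb.deleteEdges {f2}}, pair_le_edgeDeck hmE hf2E hmf2, ?_⟩
    refine Multiset.Rel.cons (cc (hiso A (by simp)) hCm) ?_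
    exact Multiset.Rel.cons (cc (hiso B (by simp)) hCf) Multiset.Rel.zero
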